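/- Let B be the bilateral backward shift on ℓ^p(ℤ, ω) with sup_{n∈ℤ} ω_n/ω_{n+1} < ∞. If there exist x ∈ ℓ^p(ℤ, ω) and a subset Γ of ℂ that is both bounded and bounded away from zero such that Orb(Γx, B) has a non-zero norm limit point, then B is hypercyclic. -/

import Mathlib

open MeasureTheory Filter Topology
open scoped ENNReal

noncomputable section

/-- The weighted measure on the index set `I` giving the point `k` mass `(ω k) ^ p`,
so that `Lp ℂ p (wMeasure p ω)` is the weighted sequence space `ℓ^p(I, ω)`. -/
def wMeasure {I : Type*} [MeasurableSpace I] (p : ENNReal) (ω : I → ℝ) : Measure I :=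
  Measure.sum (fun k => ENNReal.ofReal ((ω k) ^ p.toReal) • Measure.dirac k)

set_option maxHeartbeats 1000000

section Aux

variable (p : ENNReal) [Fact (1 ≤ p)] (ω : ℤ → ℝ)

set_option linter.unusedSectionVars false

lemma t_pos (hp : p ≠ ∞) : 0 < p.toReal :=
  ENNReal.toReal_pos (by have := Fact.out (p := 1 ≤ p); intro h; rw [h] at this; simp at this) hp

lemma p_ne_zero : p ≠ 0 := by
  have := Fact.out (p := 1 ≤ p); intro h; rw [h] at this; simp at this

lemma wlint (f : ℤ → ℝ≥0∞) :
    ∫⁻ a, f a ∂(wMeasure p ω) = ∑' k, ENNReal.ofReal (ω k ^ p.toReal) * f k := by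
  rw [wMeasure, lintegral_sum_measure]
  congr 1; ext k
  rw [lintegral_smul_measure, lintegral_dirac, smul_eq_mul]

lemma wsingleton (k : ℤ) : wMeasure p ω {k} = ENNReal.ofReal (ω k ^ p.toReal) := by
  have : wMeasure p ω {k} = ∫⁻ a, Set.indicator {k} (fun _ => 1) a ∂(wMeasure p ω) := by
    rw [lintegral_indicator (by measurability)]
    simp
  rw [this, wlint]
  rw [tsum_eq_single k]
  · simp
  · intro j hj; simp [Set.indicator, hj]

lemma wpos (hω : ∀ k, 0 < ω k) (k : ℤ) : 0 < wMeasure p ω {k} := by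
  rw [wsingleton]
  exact ENNReal.ofReal_pos.2 (Real.rpow_pos_of_pos (hω k) _)

/-- a.e. properties hold everywhere. -/
lemma wae (hω : ∀ k, 0 < ω k) {P : ℤ → Prop} (h : ∀ᵐ k ∂(wMeasure p ω), P k) : ∀ k, P k := by
  intro k
  by_contra hk
  have h1 : wMeasure p ω {a | ¬ P a} = 0 := h
  have h2 : wMeasure p ω {k} ≤ wMeasure p ω {a | ¬ P a} :=
    measure_mono (by simpa using hk)
  have := wpos p ω hω k
  rw [h1] at h2
  exact absurd (le_antisymm h2 zero_le) (ne_of_gt this)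

lemma weq (hω : ∀ k, 0 < ω k) {f g : ℤ → ℂ} (h : f =ᵐ[wMeasure p ω] g) : ∀ k, f k = g k :=
  wae p ω hω h

end Aux

section Aux2

variable (p : ENNReal) [Fact (1 ≤ p)] (ω : ℤ → ℝ)

set_option linter.unusedSectionVars false

lemma wmeas (g : ℤ → ℂ) : AEStronglyMeasurable g (wMeasure p ω) :=
  (Measurable.of_discrete).aestronglyMeasurable

lemma wnorm_pow (hp : p ≠ ∞) (g : ℤ → ℂ) :
    eLpNorm g p (wMeasure p ω) ^ p.toReal
      = ∑' k, ENNReal.ofReal (ω k ^ p.toReal) * (‖g k‖₊ : ℝ≥0∞) ^ p.toReal := by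
  rw [eLpNorm_eq_lintegral_rpow_enorm_toReal (p_ne_zero p) hp, one_div,
    ENNReal.rpow_inv_rpow (ne_of_gt (t_pos p hp)), wlint]
  rfl

lemma wcoord_le (hp : p ≠ ∞) (hω : ∀ k, 0 < ω k) (g : ℤ → ℂ) (k : ℤ) :
    ENNReal.ofReal (ω k) * (‖g k‖₊ : ℝ≥0∞) ≤ eLpNorm g p (wMeasure p ω) := by
  have ht := t_pos p hp
  rw [← ENNReal.rpow_le_rpow_iff ht, wnorm_pow p ω hp g,
    ENNReal.mul_rpow_of_nonneg _ _ (le_of_lt ht),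
    ENNReal.ofReal_rpow_of_pos (hω k)]
  exact ENNReal.le_tsum k

end Aux2

section Aux3

variable (p : ENNReal) [Fact (1 ≤ p)] (ω : ℤ → ℝ)

set_option linter.unusedSectionVars false

lemma t_ge_one (hp : p ≠ ∞) : 1 ≤ p.toReal := by
  have h := Fact.out (p := 1 ≤ p)
  calc (1:ℝ) = (1:ℝ≥0∞).toReal := by simp
  _ ≤ p.toReal := ENNReal.toReal_mono hp h

/-- finitely supported sequence -/
def fsupp (F : Finset ℤ) (c : ℤ → ℂ) : ℤ → ℂ := fun k => if k ∈ F then c k else 0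

lemma wext (hω : ∀ k, 0 < ω k) {f g : Lp ℂ p (wMeasure p ω)} (h : ∀ k, f k = g k) : f = g := by
  apply Subtype.ext
  exact MeasureTheory.AEEqFun.ext (Filter.Eventually.of_forall h)

lemma wmem_fsupp (hp : p ≠ ∞) (F : Finset ℤ) (c : ℤ → ℂ) : MemLp (fsupp F c) p (wMeasure p ω) := by
  refine ⟨wmeas p ω _, ?_⟩
  have ht := t_pos p hp
  rw [← ENNReal.rpow_lt_top_iff_of_pos ht, wnorm_pow p ω hp]
  rw [tsum_eq_sum (s := F) ?h0]
  · refine (ENNReal.sum_lt_top).2 fun k _ => ?_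
    exact ENNReal.mul_lt_top ENNReal.ofReal_lt_top (ENNReal.rpow_lt_top_of_nonneg (le_of_lt ht) (by simp))
  · intro k hk
    simp [fsupp, hk, ENNReal.zero_rpow_of_pos ht]

lemma wcoe_toLp (hω : ∀ k, 0 < ω k) {g : ℤ → ℂ} (h : MemLp g p (wMeasure p ω)) (k : ℤ) :
    (h.toLp g) k = g k :=
  weq p ω hω h.coeFn_toLp k

/-- key sum inequality: (∑ aᵢ)^t ≥ ∑ aᵢ^t for t ≥ 1 -/
lemma wsum_rpow {t : ℝ} (ht : 1 ≤ t) (F : Finset ℤ) (a : ℤ → ℝ≥0∞) :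
    ∑ k ∈ F, a k ^ t ≤ (∑ k ∈ F, a k) ^ t := by
  classical
  induction F using Finset.induction with
  | empty => simp [ENNReal.zero_rpow_of_pos (lt_of_lt_of_le one_pos ht)]
  | insert _ _ hk ih =>
    rename_i j F'
    rw [Finset.sum_insert hk, Finset.sum_insert hk]
    calc a j ^ t + ∑ k ∈ F', a k ^ t ≤ a j ^ t + (∑ k ∈ F', a k) ^ t := by gcongr
    _ ≤ _ := ENNReal.add_rpow_le_rpow_add _ _ ht

lemma wnorm_fsupp_le (hp : p ≠ ∞) (hω : ∀ k, 0 < ω k) (F : Finset ℤ) (c : ℤ → ℂ) :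
    ‖(wmem_fsupp p ω hp F c).toLp (fsupp F c)‖ ≤ ∑ k ∈ F, ω k * ‖c k‖ := by
  have ht := t_pos p hp
  rw [Lp.norm_def, eLpNorm_congr_ae (wmem_fsupp p ω hp F c).coeFn_toLp]
  have hb : eLpNorm (fsupp F c) p (wMeasure p ω) ≤ ENNReal.ofReal (∑ k ∈ F, ω k * ‖c k‖) := by
    rw [← ENNReal.rpow_le_rpow_iff ht, wnorm_pow p ω hp]
    rw [tsum_eq_sum (s := F) ?h0]
    · calc ∑ k ∈ F, ENNReal.ofReal (ω k ^ p.toReal) * (‖fsupp F c k‖₊ : ℝ≥0∞) ^ p.toReal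
          = ∑ k ∈ F, (ENNReal.ofReal (ω k * ‖c k‖)) ^ p.toReal := by
            refine Finset.sum_congr rfl fun k hk => ?_
            rw [← ENNReal.ofReal_rpow_of_pos (hω k),
              ← ENNReal.mul_rpow_of_nonneg _ _ (le_of_lt ht)]
            congr 1
            rw [ENNReal.ofReal_mul (le_of_lt (hω k))]
            congr 1
            · simp only [fsupp, hk, if_true]
              rw [← (ofReal_norm (c k)).trans (enorm_eq_nnnorm _)]
        _ ≤ (∑ k ∈ F, ENNReal.ofReal (ω k * ‖c k‖)) ^ p.toReal :=
            wsum_rpow (t_ge_one p hp) F _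
        _ = _ := by rw [ENNReal.ofReal_sum_of_nonneg]
                    intro k _
                    exact mul_nonneg (hω k).le (norm_nonneg _)
    · intro k hk
      simp [fsupp, hk, ENNReal.zero_rpow_of_pos ht]
  calc (eLpNorm (fsupp F c) p (wMeasure p ω)).toReal
      ≤ (ENNReal.ofReal (∑ k ∈ F, ω k * ‖c k‖)).toReal := by
        exact ENNReal.toReal_mono ENNReal.ofReal_ne_top hb
    _ ≤ _ := le_of_eq (ENNReal.toReal_ofReal
        (Finset.sum_nonneg fun k _ => mul_nonneg (hω k).le (norm_nonneg _)))

end Aux3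

section Aux4

variable (p : ENNReal) [Fact (1 ≤ p)] (ω : ℤ → ℝ)

set_option linter.unusedSectionVars false

lemma wcoe_sub (hω : ∀ k, 0 < ω k) (f g : Lp ℂ p (wMeasure p ω)) (k : ℤ) : (f - g) k = f k - g k :=
  weq p ω hω (Lp.coeFn_sub f g) k

lemma wcoe_smul (hω : ∀ k, 0 < ω k) (c : ℂ) (f : Lp ℂ p (wMeasure p ω)) (k : ℤ) : (c • f) k = c * f k :=
  weq p ω hω (Lp.coeFn_smul c f) k

lemma wcoe_zero (hω : ∀ k, 0 < ω k) (k : ℤ) : (0 : Lp ℂ p (wMeasure p ω)) k = 0 :=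
  weq p ω hω (Lp.coeFn_zero ℂ p (wMeasure p ω)) k

lemma wne_zero (hω : ∀ k, 0 < ω k) {f : Lp ℂ p (wMeasure p ω)} (h : f ≠ 0) : ∃ k, f k ≠ 0 := by
  by_contra hc
  push_neg at hc
  exact h (wext p ω hω fun k => by rw [hc k, wcoe_zero p ω hω])

lemma wcoord_norm (hp : p ≠ ∞) (hω : ∀ k, 0 < ω k) (f : Lp ℂ p (wMeasure p ω)) (k : ℤ) : ω k * ‖f k‖ ≤ ‖f‖ := by
  have h := wcoord_le p ω hp hω (⇑f) k
  have h2 := ENNReal.toReal_mono (Lp.eLpNorm_ne_top f) h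
  rw [Lp.norm_def]
  calc ω k * ‖f k‖ = (ENNReal.ofReal (ω k) * (‖f k‖₊ : ℝ≥0∞)).toReal := by
        rw [ENNReal.toReal_mul, ENNReal.toReal_ofReal (hω k).le]; simp
  _ ≤ _ := h2

lemma wtail (hp : p ≠ ∞) (hω : ∀ k, 0 < ω k) (f : Lp ℂ p (wMeasure p ω)) :
    Tendsto (fun k => ω k * ‖f k‖) cofinite (𝓝 0) := by
  have hsum : ∑' k, ENNReal.ofReal (ω k ^ p.toReal) * (‖f k‖₊ : ℝ≥0∞) ^ p.toReal ≠ ∞ := by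
    rw [← wnorm_pow p ω hp]
    exact ENNReal.rpow_ne_top_of_nonneg (t_pos p hp).le (Lp.eLpNorm_ne_top f)
  have h0 := ENNReal.tendsto_cofinite_zero_of_tsum_ne_top hsum
  have heq : ∀ k, ENNReal.ofReal (ω k ^ p.toReal) * (‖f k‖₊ : ℝ≥0∞) ^ p.toReal
      = ENNReal.ofReal (ω k * ‖f k‖) ^ p.toReal := by
    intro k
    rw [ENNReal.ofReal_mul (hω k).le, ENNReal.mul_rpow_of_nonneg _ _ (t_pos p hp).le,
      ENNReal.ofReal_rpow_of_pos (hω k), (ofReal_norm (f k)).trans (enorm_eq_nnnorm _)]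
  simp_rw [heq] at h0
  -- now deduce real convergence
  rw [Metric.tendsto_nhds]
  intro ε hε
  have hε2 : (0:ℝ) < ε / 2 := by linarith
  have hev := ENNReal.tendsto_nhds_zero.1 h0 (ENNReal.ofReal ((ε/2) ^ p.toReal))
    (by simp [ENNReal.ofReal_pos, Real.rpow_pos_of_pos hε2])
  filter_upwards [hev] with k hk
  have hk2 : ENNReal.ofReal (ω k * ‖f k‖) ^ p.toReal ≤ ENNReal.ofReal (ε/2) ^ p.toReal := by
    rw [ENNReal.ofReal_rpow_of_pos hε2]; exact hk
  have hk3 : ENNReal.ofReal (ω k * ‖f k‖) ≤ ENNReal.ofReal (ε/2) :=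
    (ENNReal.rpow_le_rpow_iff (t_pos p hp)).1 hk2
  have hk4 : ω k * ‖f k‖ ≤ ε/2 := by
    have := ENNReal.toReal_mono ENNReal.ofReal_ne_top hk3
    rwa [ENNReal.toReal_ofReal (mul_nonneg (hω k).le (norm_nonneg _)),
      ENNReal.toReal_ofReal hε2.le] at this
  have hnn : 0 ≤ ω k * ‖f k‖ := mul_nonneg (hω k).le (norm_nonneg _)
  rw [Real.dist_eq, sub_zero, abs_of_nonneg hnn]
  linarith

end Aux4

section Aux5

variable (p : ENNReal) [Fact (1 ≤ p)] (ω : ℤ → ℝ)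

set_option linter.unusedSectionVars false

lemma wpow_coe (hω : ∀ k, 0 < ω k) (B : Lp ℂ p (wMeasure p ω) →L[ℂ] Lp ℂ p (wMeasure p ω))
    (hB : ∀ (x : Lp ℂ p (wMeasure p ω)) (k : ℤ), B x k = x (k + 1)) :
    ∀ (m : ℕ) (x : Lp ℂ p (wMeasure p ω)) (k : ℤ), (B ^ m) x k = x (k + m) := by
  intro m
  induction m with
  | zero => intro x k; simp
  | succ m ih =>
    intro x k
    have h1 : (B ^ (m+1)) x = (B ^ m) (B x) := by
      rw [pow_succ]; rfl
    rw [h1, ih (B x) k, hB x (k + m)]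
    congr 1
    push_cast
    ring

/-- chain bound from the weight ratio condition -/
lemma wchain (hω : ∀ k, 0 < ω k) {C : ℝ} (hC : ∀ k, ω k ≤ C * ω (k+1)) (hC1 : 1 ≤ C) :
    ∀ (m : ℕ) (j : ℤ), ω (j - m) ≤ C ^ m * ω j := by
  intro m
  induction m with
  | zero => intro j; simp
  | succ m ih =>
    intro j
    have h1 : ω (j - (m+1:ℕ)) ≤ C * ω (j - m) := by
      have := hC (j - (m+1:ℕ))
      have he : j - (m+1:ℕ) + 1 = j - m := by push_cast; ring
      rwa [he] at this
    calc ω (j - (m+1:ℕ)) ≤ C * ω (j - m) := h1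
    _ ≤ C * (C ^ m * ω j) := by
        have hCpos : (0:ℝ) < C := lt_of_lt_of_le one_pos hC1
        exact mul_le_mul_of_nonneg_left (ih j) hCpos.le
    _ = C ^ (m+1) * ω j := by ring

end Aux5

section Key

variable (p : ENNReal) [Fact (1 ≤ p)] (ω : ℤ → ℝ)

set_option linter.unusedSectionVars false
set_option maxHeartbeats 1000000

lemma wkeyL (hp : p ≠ ∞) (hω : ∀ k, 0 < ω k)
    {C : ℝ} (hC : ∀ k, ω k ≤ C * ω (k+1)) (hC1 : 1 ≤ C)
    (B : Lp ℂ p (wMeasure p ω) →L[ℂ] Lp ℂ p (wMeasure p ω))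
    (hB : ∀ (x : Lp ℂ p (wMeasure p ω)) (k : ℤ), B x k = x (k + 1))
    {M c : ℝ} (hc : 0 < c)
    (x : Lp ℂ p (wMeasure p ω)) (lam : ℕ → ℂ)
    (hlamM : ∀ k, ‖lam k‖ ≤ M) (hlamc : ∀ k, c ≤ ‖lam k‖)
    (n : ℕ → ℕ) (hn : StrictMono n)
    (y : Lp ℂ p (wMeasure p ω)) (hy : y ≠ 0)
    (hconv : Tendsto (fun k => lam k • (B ^ n k) x) atTop (nhds y)) :
    ∀ (r : ℤ) (ε : ℝ), 0 < ε → ∀ N : ℕ, ∃ m : ℕ, N ≤ m ∧ ω (m + r) < ε ∧ ω (r - m) < ε := by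
  have hM0 : 0 < M := lt_of_lt_of_le hc (le_trans (hlamc 0) (hlamM 0))
  have hdist : Tendsto (fun k => ‖lam k • (B ^ n k) x - y‖) atTop (𝓝 0) :=
    tendsto_iff_norm_sub_tendsto_zero.1 hconv
  have hdcoe : ∀ (k : ℕ) (j : ℤ),
      (lam k • (B ^ n k) x - y) j = lam k * x (j + n k) - y j := by
    intro k j
    rw [wcoe_sub p ω hω, wcoe_smul p ω hω, wpow_coe p ω hω B hB]
  have hcoordbound : ∀ (k : ℕ) (j : ℤ),
      ω j * ‖lam k * x (j + n k) - y j‖ ≤ ‖lam k • (B ^ n k) x - y‖ := by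
    intro k j
    have h := wcoord_norm p ω hp hω (lam k • (B ^ n k) x - y) j
    rwa [hdcoe k j] at h
  have hcoordconv : ∀ j : ℤ, Tendsto (fun k => lam k * x (j + n k)) atTop (𝓝 (y j)) := by
    intro j
    rw [tendsto_iff_norm_sub_tendsto_zero]
    apply squeeze_zero (fun k => norm_nonneg _) (g := fun k => (ω j)⁻¹ * ‖lam k • (B ^ n k) x - y‖)
    · intro k
      rw [inv_mul_eq_div, le_div_iff₀ (hω j), mul_comm]
      exact hcoordbound k j
    · simpa using hdist.const_mul ((ω j)⁻¹)
  have hnZ : Tendsto (fun k => (n k : ℤ)) atTop atTop :=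
    tendsto_natCast_atTop_atTop.comp hn.tendsto_atTop
  have hcof : ∀ j : ℤ, Tendsto (fun k => j + (n k : ℤ)) atTop cofinite := by
    intro j
    have h1 : Tendsto (fun k => j + (n k : ℤ)) atTop atTop :=
      tendsto_atTop_add_const_left _ j hnZ
    exact h1.mono_right (by rw [Int.cofinite_eq]; exact le_sup_right)
  have hcofneg : ∀ j : ℤ, Tendsto (fun k => j - (n k : ℤ)) atTop cofinite := by
    intro j
    have h1 : Tendsto (fun k => j - (n k : ℤ)) atTop atBot := by
      apply tendsto_atBot_add_const_left
      exact tendsto_neg_atBot_iff.2 hnZ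
    exact h1.mono_right (by rw [Int.cofinite_eq]; exact le_sup_left)
  have forward : ∀ j : ℤ, y j ≠ 0 → Tendsto (fun k => ω (j + n k)) atTop (𝓝 0) := by
    intro j hyj
    have habs : Tendsto (fun k => ‖lam k * x (j + n k)‖) atTop (𝓝 ‖y j‖) := (hcoordconv j).norm
    have hyj' : 0 < ‖y j‖ := norm_pos_iff.2 hyj
    have hev : ∀ᶠ k in atTop, ‖y j‖ / 2 < ‖lam k * x (j + n k)‖ :=
      habs.eventually (eventually_gt_nhds (by linarith))
    have htail : Tendsto (fun k => ω (j + n k) * ‖x (j + n k)‖) atTop (𝓝 0) :=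
      (wtail p ω hp hω x).comp (hcof j)
    set δ : ℝ := ‖y j‖ / (2 * M) with hδ
    have hδpos : 0 < δ := by positivity
    have hevδ : ∀ᶠ k in atTop, δ ≤ ‖x (j + n k)‖ := by
      filter_upwards [hev] with k hk
      have h2 : ‖lam k * x (j + n k)‖ ≤ M * ‖x (j + n k)‖ := by
        rw [norm_mul]
        exact mul_le_mul_of_nonneg_right (hlamM k) (norm_nonneg _)
      rw [hδ, div_le_iff₀ (by positivity)]
      nlinarith
    rw [NormedAddCommGroup.tendsto_nhds_zero]
    intro ε hε
    have h3 := NormedAddCommGroup.tendsto_nhds_zero.1 htail (ε * δ) (by positivity)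
    filter_upwards [h3, hevδ] with k h4 h5
    have h6 : ω (j + n k) * δ ≤ ω (j + n k) * ‖x (j + n k)‖ :=
      mul_le_mul_of_nonneg_left h5 (hω _).le
    have h7 : ω (j + n k) * ‖x (j + n k)‖ < ε * δ := by
      have := h4
      rwa [Real.norm_eq_abs, abs_of_nonneg (mul_nonneg (hω _).le (norm_nonneg _))] at this
    have h8 : ω (j + n k) < ε := lt_of_mul_lt_mul_right (lt_of_le_of_lt h6 h7) hδpos.le
    rw [Real.norm_eq_abs, abs_of_pos (hω _)]
    exact h8
  have backward : ∀ j : ℤ, x j ≠ 0 → Tendsto (fun k => ω (j - n k)) atTop (𝓝 0) := by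
    intro j hxj
    have hxj' : 0 < ‖x j‖ := norm_pos_iff.2 hxj
    have b1 : Tendsto (fun k => ω (j - n k) * ‖lam k * x j - y (j - n k)‖) atTop (𝓝 0) := by
      apply squeeze_zero (fun k => mul_nonneg (hω _).le (norm_nonneg _))
        (g := fun k => ‖lam k • (B ^ n k) x - y‖) _ hdist
      intro k
      have h := hcoordbound k (j - n k)
      rwa [sub_add_cancel] at h
    have b2 : Tendsto (fun k => ω (j - n k) * ‖y (j - n k)‖) atTop (𝓝 0) :=
      (wtail p ω hp hω y).comp (hcofneg j)
    set δ : ℝ := c * ‖x j‖ with hδ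
    have hδpos : 0 < δ := by positivity
    rw [NormedAddCommGroup.tendsto_nhds_zero]
    intro ε hε
    have hb12 := (b1.add b2)
    rw [add_zero] at hb12
    have h3 := NormedAddCommGroup.tendsto_nhds_zero.1 hb12 (ε * δ) (by positivity)
    filter_upwards [h3] with k h4
    have h5 : ω (j - n k) * δ ≤ ω (j - n k) * ‖lam k * x j - y (j - n k)‖
        + ω (j - n k) * ‖y (j - n k)‖ := by
      have h6 : δ ≤ ‖lam k * x j‖ := by
        rw [hδ, norm_mul]
        exact mul_le_mul_of_nonneg_right (hlamc k) (norm_nonneg _)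
      have h7 : ‖lam k * x j‖ - ‖y (j - n k)‖ ≤ ‖lam k * x j - y (j - n k)‖ :=
        norm_sub_norm_le _ _
      have h8 : ω (j - n k) * δ ≤ ω (j - n k) * (‖lam k * x j - y (j - n k)‖ + ‖y (j - n k)‖) := by
        apply mul_le_mul_of_nonneg_left _ (hω _).le
        linarith
      linarith [h8, (mul_add (ω (j - n k)) ‖lam k * x j - y (j - n k)‖ ‖y (j - n k)‖).le]
    have h9 : ω (j - n k) * ‖lam k * x j - y (j - n k)‖ + ω (j - n k) * ‖y (j - n k)‖ < ε * δ := by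
      have := h4
      rw [Real.norm_eq_abs, abs_of_nonneg] at this
      · exact this
      · exact add_nonneg (mul_nonneg (hω _).le (norm_nonneg _)) (mul_nonneg (hω _).le (norm_nonneg _))
    rw [Real.norm_eq_abs, abs_of_pos (hω _)]
    exact lt_of_mul_lt_mul_right (lt_of_le_of_lt h5 h9) hδpos.le
  -- main argument
  intro r ε hε N
  obtain ⟨j1, hj1⟩ := wne_zero p ω hω hy
  set s : ℤ := 2*r - j1 with hs
  by_cases hcase : ∃ j, s ≤ j ∧ x j ≠ 0
  · obtain ⟨j, hjs, hxj⟩ := hcase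
    have hf := forward j1 hj1
    have hb := backward j hxj
    have hsn : Tendsto (fun k => ω (s - n k)) atTop (𝓝 0) := by
      set d : ℕ := (j - s).toNat with hd
      have hds : (d : ℤ) = j - s := Int.toNat_of_nonneg (by omega)
      apply squeeze_zero (fun k => (hω _).le) (g := fun k => C ^ d * ω (j - n k))
      · intro k
        have := wchain ω hω hC hC1 d (j - n k)
        have he : (j - n k) - d = s - n k := by omega
        rwa [he] at this
      · simpa using hb.const_mul (C ^ d)
    have hev1 := hf.eventually (gt_mem_nhds hε)
    have hev2 := hsn.eventually (gt_mem_nhds hε)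
    have hev3 : ∀ᶠ k in atTop, (N : ℤ) + r - j1 ≤ (n k : ℤ) ∧ r - j1 ≤ (n k : ℤ) :=
      (hnZ.eventually_ge_atTop _).and (hnZ.eventually_ge_atTop _)
    obtain ⟨k, ⟨hk1, hk2⟩, hk3, hk4⟩ := ((hev1.and hev2).and hev3).exists
    refine ⟨((n k : ℤ) + j1 - r).toNat, by omega, ?_, ?_⟩
    · have he : ((((n k : ℤ) + j1 - r).toNat : ℤ)) + r = j1 + n k := by omega
      rw [he]
      exact hk1
    · have he : r - ((((n k : ℤ) + j1 - r).toNat : ℤ)) = s - n k := by omega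
      rw [he]
      exact hk2
  · push_neg at hcase
    exfalso
    have hconv1 := hcoordconv j1
    have hev : ∀ᶠ k in atTop, lam k * x (j1 + n k) = 0 := by
      filter_upwards [hnZ.eventually_ge_atTop (s - j1)] with k hk
      rw [hcase (j1 + n k) (by omega), mul_zero]
    have : Tendsto (fun _ : ℕ => (0:ℂ)) atTop (𝓝 (y j1)) := hconv1.congr' hev
    exact hj1 (tendsto_nhds_unique tendsto_const_nhds this).symm

end Key

section Dense

variable (p : ENNReal) [Fact (1 ≤ p)] (ω : ℤ → ℝ)

set_option linter.unusedSectionVars false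
set_option maxHeartbeats 1000000

lemma wtrunc (hp : p ≠ ∞) (hω : ∀ k, 0 < ω k) (f : Lp ℂ p (wMeasure p ω)) {ε : ℝ} (hε : 0 < ε) :
    ∃ F : Finset ℤ, ‖f - (wmem_fsupp p ω hp F (⇑f)).toLp _‖ < ε := by
  have ht := t_pos p hp
  have hsum : ∑' k, ENNReal.ofReal (ω k ^ p.toReal) * (‖f k‖₊ : ℝ≥0∞) ^ p.toReal ≠ ∞ := by
    rw [← wnorm_pow p ω hp]
    exact ENNReal.rpow_ne_top_of_nonneg ht.le (Lp.eLpNorm_ne_top f)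
  have htail := ENNReal.tendsto_tsum_compl_atTop_zero hsum
  have hpos : (0:ℝ≥0∞) < ENNReal.ofReal ε ^ p.toReal := by
    apply ENNReal.rpow_pos (by simp [ENNReal.ofReal_pos, hε])
    exact ENNReal.ofReal_ne_top
  obtain ⟨F, hF⟩ := (htail.eventually (gt_mem_nhds hpos)).exists
  refine ⟨F, ?_⟩
  set T := (wmem_fsupp p ω hp F (⇑f)).toLp _ with hT
  have hcoe : ∀ k, (f - T) k = (if k ∈ F then 0 else f k) := by
    intro k
    rw [wcoe_sub p ω hω, wcoe_toLp p ω hω]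
    simp only [fsupp]
    split <;> simp
  have hnorm : eLpNorm (⇑(f - T)) p (wMeasure p ω) ^ p.toReal
      = ∑' k : ℤ, Set.indicator {x | x ∉ F} (fun k => ENNReal.ofReal (ω k ^ p.toReal) * (‖f k‖₊ : ℝ≥0∞) ^ p.toReal) k := by
    rw [wnorm_pow p ω hp]
    congr 1
    ext k
    rw [Set.indicator]
    by_cases hk : k ∈ F
    · simp only [hcoe k, hk, if_true, Set.mem_setOf_eq, not_true]
      simp [ENNReal.zero_rpow_of_pos ht]
    · simp only [hcoe k, hk, if_false, Set.mem_setOf_eq, not_false_iff]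
      simp
  rw [← tsum_subtype] at hnorm
  have hlt : eLpNorm (⇑(f - T)) p (wMeasure p ω) ^ p.toReal < ENNReal.ofReal ε ^ p.toReal := by
    rw [hnorm]
    exact lt_of_le_of_lt (le_of_eq rfl) hF
  have hlt2 : eLpNorm (⇑(f - T)) p (wMeasure p ω) < ENNReal.ofReal ε :=
    (ENNReal.rpow_lt_rpow_iff ht).1 hlt
  rw [Lp.norm_def]
  calc (eLpNorm (⇑(f - T)) p (wMeasure p ω)).toReal
      < (ENNReal.ofReal ε).toReal :=
        ENNReal.toReal_strict_mono ENNReal.ofReal_ne_top hlt2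
    _ = ε := ENNReal.toReal_ofReal hε.le

end Dense

section CountableDense

variable (p : ENNReal) [Fact (1 ≤ p)] (ω : ℤ → ℝ)

set_option linter.unusedSectionVars false
set_option maxHeartbeats 1000000

/-- countable set of rational finitely supported vectors -/
def wD (hp : p ≠ ∞) : Set (Lp ℂ p (wMeasure p ω)) :=
  Set.range (fun Fc : Σ F : Finset ℤ, (F → ℚ × ℚ) =>
    (wmem_fsupp p ω hp Fc.1 (fun k =>
      if h : k ∈ Fc.1 then ((Fc.2 ⟨k, h⟩).1 : ℝ) + ((Fc.2 ⟨k, h⟩).2 : ℝ) * Complex.I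
      else 0)).toLp _)

lemma wD_countable (hp : p ≠ ∞) : (wD p ω hp).Countable :=
  Set.countable_range _

lemma wD_dense (hp : p ≠ ∞) (hω : ∀ k, 0 < ω k) (f : Lp ℂ p (wMeasure p ω)) {ε : ℝ}
    (hε : 0 < ε) : ∃ g ∈ wD p ω hp, ‖f - g‖ < ε := by
  obtain ⟨F, hF⟩ := wtrunc p ω hp hω f (half_pos hε)
  set T := (wmem_fsupp p ω hp F (⇑f)).toLp _ with hT
  set S : ℝ := ∑ k ∈ F, ω k with hS
  have hSpos : 0 < S + 1 := by
    have : 0 ≤ S := Finset.sum_nonneg fun k _ => (hω k).le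
    linarith
  set δ : ℝ := ε / (4 * (S + 1)) with hδ
  have hδpos : 0 < δ := by positivity
  -- choose rational approximations
  have hchoice : ∀ k : ℤ, ∃ q : ℚ × ℚ,
      ‖f k - ((q.1 : ℝ) + (q.2 : ℝ) * Complex.I)‖ < 2 * δ := by
    intro k
    obtain ⟨q1, hq1⟩ := exists_rat_near (f k : ℂ).re hδpos
    obtain ⟨q2, hq2⟩ := exists_rat_near (f k : ℂ).im hδpos
    refine ⟨(q1, q2), ?_⟩
    have hz : (f k - ((q1 : ℝ) + (q2 : ℝ) * Complex.I)).re = (f k).re - q1 := by simp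
    have hz2 : (f k - ((q1 : ℝ) + (q2 : ℝ) * Complex.I)).im = (f k).im - q2 := by simp
    calc ‖f k - ((q1 : ℝ) + (q2 : ℝ) * Complex.I)‖
        ≤ |(f k - ((q1 : ℝ) + (q2 : ℝ) * Complex.I)).re|
          + |(f k - ((q1 : ℝ) + (q2 : ℝ) * Complex.I)).im| := Complex.norm_le_abs_re_add_abs_im _
      _ < 2 * δ := by
          rw [hz, hz2]
          linarith [hq1, hq2]
  choose q hq using hchoice
  set g := (wmem_fsupp p ω hp F (fun k =>
      if h : k ∈ F then ((q k).1 : ℝ) + ((q k).2 : ℝ) * Complex.I else 0)).toLp _ with hg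
  have hgD : g ∈ wD p ω hp := ⟨⟨F, fun k => q k.1⟩, rfl⟩
  refine ⟨g, hgD, ?_⟩
  -- T - g is finitely supported with small coefficients
  have hdiff : T - g = (wmem_fsupp p ω hp F (fun k =>
      f k - (if h : k ∈ F then ((q k).1 : ℝ) + ((q k).2 : ℝ) * Complex.I else 0))).toLp _ := by
    apply wext p ω hω
    intro k
    rw [wcoe_sub p ω hω, wcoe_toLp p ω hω, wcoe_toLp p ω hω, wcoe_toLp p ω hω]
    simp only [fsupp]
    split <;> simp
  have hTg : ‖T - g‖ < ε / 2 := by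
    rw [hdiff]
    calc ‖_‖ ≤ ∑ k ∈ F, ω k * ‖f k - (if h : k ∈ F then ((q k).1 : ℝ) + ((q k).2 : ℝ) * Complex.I else 0)‖ :=
          wnorm_fsupp_le p ω hp hω F _
      _ ≤ ∑ k ∈ F, ω k * (2 * δ) := by
          apply Finset.sum_le_sum
          intro k hk
          apply mul_le_mul_of_nonneg_left _ (hω k).le
          rw [dif_pos hk]
          exact (hq k).le
      _ = S * (2 * δ) := by rw [hS, Finset.sum_mul]
      _ < ε / 2 := by
          have hδS : (4 * (S+1)) * δ = ε := by rw [hδ]; field_simp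
          nlinarith [hδpos]
  calc ‖f - g‖ = ‖(f - T) + (T - g)‖ := by rw [sub_add_sub_cancel]
    _ ≤ ‖f - T‖ + ‖T - g‖ := norm_add_le _ _
    _ < ε / 2 + ε / 2 := by exact add_lt_add hF hTg
    _ = ε := by ring

end CountableDense

section Trans

variable (p : ENNReal) [Fact (1 ≤ p)] (ω : ℤ → ℝ)

set_option linter.unusedSectionVars false
set_option maxHeartbeats 1000000

lemma wtrans (hp : p ≠ ∞) (hω : ∀ k, 0 < ω k)
    {C : ℝ} (hC : ∀ k, ω k ≤ C * ω (k+1)) (hC1 : 1 ≤ C)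
    (B : Lp ℂ p (wMeasure p ω) →L[ℂ] Lp ℂ p (wMeasure p ω))
    (hB : ∀ (x : Lp ℂ p (wMeasure p ω)) (k : ℤ), B x k = x (k + 1))
    (hkey : ∀ (r : ℤ) (ε : ℝ), 0 < ε → ∀ N : ℕ, ∃ m : ℕ, N ≤ m ∧ ω (m + r) < ε ∧ ω (r - m) < ε)
    (u v : Lp ℂ p (wMeasure p ω)) {ε : ℝ} (hε : 0 < ε) :
    ∃ (m : ℕ) (w : Lp ℂ p (wMeasure p ω)), ‖w - u‖ < ε ∧ ‖(B ^ m) w - v‖ < ε := by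
  have hε3 : 0 < ε / 3 := by linarith
  obtain ⟨Fu, hFu⟩ := wtrunc p ω hp hω u hε3
  obtain ⟨Fv, hFv⟩ := wtrunc p ω hp hω v hε3
  set u' := (wmem_fsupp p ω hp Fu (⇑u)).toLp _ with hu'
  set v' := (wmem_fsupp p ω hp Fv (⇑v)).toLp _ with hv'
  set q : ℕ := (Fu ∪ Fv).sup Int.natAbs with hqdef
  have hq : ∀ k ∈ Fu ∪ Fv, k.natAbs ≤ q := fun k hk => Finset.le_sup hk
  have hCpos : (0:ℝ) < C := lt_of_lt_of_le one_pos hC1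
  have hC2q : (0:ℝ) < C ^ (2*q) := pow_pos hCpos _
  set S : ℝ := (∑ k ∈ Fu, ‖u k‖) + (∑ k ∈ Fv, ‖v k‖) + 1 with hSdef
  have hSu : 0 ≤ ∑ k ∈ Fu, ‖u k‖ := Finset.sum_nonneg fun k _ => norm_nonneg _
  have hSv : 0 ≤ ∑ k ∈ Fv, ‖v k‖ := Finset.sum_nonneg fun k _ => norm_nonneg _
  have hSpos : 0 < S := by rw [hSdef]; linarith
  set ε' : ℝ := ε / (3 * C ^ (2*q) * S) with hε'def
  have hε'pos : 0 < ε' := by positivity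
  obtain ⟨m, -, hm2, hm3⟩ := hkey (q : ℤ) ε' hε'pos 0
  -- window bounds
  have hwin : ∀ j : ℤ, j.natAbs ≤ q → ω (j + m) ≤ C ^ (2*q) * ω ((m:ℤ) + q)
      ∧ ω (j - m) ≤ C ^ (2*q) * ω ((q:ℤ) - m) := by
    intro j hj
    constructor
    · set d : ℕ := ((q:ℤ) - j).toNat with hd
      have hdle : d ≤ 2*q := by omega
      have h1 := wchain ω hω hC hC1 d ((q:ℤ) + m)
      have he : ((q:ℤ) + m) - d = j + m := by omega
      rw [he] at h1
      calc ω (j + m) ≤ C ^ d * ω ((q:ℤ) + m) := h1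
        _ ≤ C ^ (2*q) * ω ((q:ℤ) + m) :=
            mul_le_mul_of_nonneg_right (pow_le_pow_right₀ hC1 hdle) (hω _).le
        _ = C ^ (2*q) * ω ((m:ℤ) + q) := by rw [add_comm (q:ℤ) (m:ℤ)]
    · set d : ℕ := ((q:ℤ) - j).toNat with hd
      have hdle : d ≤ 2*q := by omega
      have h1 := wchain ω hω hC hC1 d ((q:ℤ) - m)
      have he : ((q:ℤ) - m) - d = j - m := by omega
      rw [he] at h1
      calc ω (j - m) ≤ C ^ d * ω ((q:ℤ) - m) := h1
        _ ≤ C ^ (2*q) * ω ((q:ℤ) - m) :=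
            mul_le_mul_of_nonneg_right (pow_le_pow_right₀ hC1 hdle) (hω _).le
  -- the shifted copy of v'
  set sh := (wmem_fsupp p ω hp (Fv.image (fun j => j + (m:ℤ)))
      (fun k => fsupp Fv (⇑v) (k - m))).toLp _ with hsh
  set w := u' + sh with hw
  have hinj : ∀ a ∈ Fv, ∀ b ∈ Fv, a + (m:ℤ) = b + (m:ℤ) → a = b := fun a _ b _ h => by omega
  -- norm of sh
  have hshnorm : ‖sh‖ < ε / 3 := by
    calc ‖sh‖ ≤ ∑ k ∈ Fv.image (fun j => j + (m:ℤ)), ω k * ‖fsupp Fv (⇑v) (k - m)‖ :=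
          wnorm_fsupp_le p ω hp hω _ _
      _ = ∑ j ∈ Fv, ω (j + m) * ‖fsupp Fv (⇑v) (j + (m:ℤ) - m)‖ := Finset.sum_image hinj
      _ = ∑ j ∈ Fv, ω (j + m) * ‖v j‖ := by
          apply Finset.sum_congr rfl
          intro j hj
          rw [add_sub_cancel_right]
          simp [fsupp, hj]
      _ ≤ ∑ j ∈ Fv, (C ^ (2*q) * ω ((m:ℤ) + q)) * ‖v j‖ := by
          apply Finset.sum_le_sum
          intro j hj
          exact mul_le_mul_of_nonneg_right
            ((hwin j (hq j (Finset.mem_union_right _ hj))).1) (norm_nonneg _)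
      _ = C ^ (2*q) * (ω ((m:ℤ) + q) * ∑ j ∈ Fv, ‖v j‖) := by
          rw [← Finset.mul_sum]; ring
      _ < C ^ (2*q) * (ε' * S) := by
          apply mul_lt_mul_of_pos_left _ hC2q
          calc ω ((m:ℤ) + q) * ∑ j ∈ Fv, ‖v j‖ ≤ ε' * ∑ j ∈ Fv, ‖v j‖ :=
                mul_le_mul_of_nonneg_right hm2.le hSv
            _ < ε' * S := by
                apply mul_lt_mul_of_pos_left _ hε'pos
                rw [hSdef]; linarith
      _ = ε / 3 := by rw [hε'def]; field_simp
  -- B^m sh = v'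
  have hBsh : (B ^ m) sh = v' := by
    apply wext p ω hω
    intro k
    rw [wpow_coe p ω hω B hB, hsh, wcoe_toLp p ω hω, hv', wcoe_toLp p ω hω]
    simp only [fsupp]
    by_cases hk : k ∈ Fv
    · rw [if_pos (Finset.mem_image.2 ⟨k, hk, rfl⟩), add_sub_cancel_right, if_pos hk]
    · rw [if_neg, if_neg hk]
      intro hmem
      obtain ⟨j, hj, hjk⟩ := Finset.mem_image.1 hmem
      have : j = k := by omega
      exact hk (this ▸ hj)
  -- B^m u' norm
  have hBu' : (B ^ m) u' = (wmem_fsupp p ω hp (Fu.image (fun j => j - (m:ℤ)))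
      (fun k => fsupp Fu (⇑u) (k + m))).toLp _ := by
    apply wext p ω hω
    intro k
    rw [wpow_coe p ω hω B hB, hu', wcoe_toLp p ω hω, wcoe_toLp p ω hω]
    show fsupp Fu (⇑u) (k + m) = fsupp (Fu.image (fun j => j - (m:ℤ))) (fun k => fsupp Fu (⇑u) (k + m)) k
    simp only [fsupp]
    by_cases hk : k + (m:ℤ) ∈ Fu
    · have himg : k ∈ Fu.image (fun j => j - (m:ℤ)) := Finset.mem_image.2 ⟨k + m, hk, by omega⟩
      simp [hk, himg]
    · by_cases hk2 : k ∈ Fu.image (fun j => j - (m:ℤ))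
      · simp [hk, hk2]
      · simp [hk, hk2]
  have hBu'norm : ‖(B ^ m) u'‖ < ε / 3 := by
    rw [hBu']
    have hinj2 : ∀ a ∈ Fu, ∀ b ∈ Fu, a - (m:ℤ) = b - (m:ℤ) → a = b := fun a _ b _ h => by omega
    calc ‖_‖ ≤ ∑ k ∈ Fu.image (fun j => j - (m:ℤ)), ω k * ‖fsupp Fu (⇑u) (k + m)‖ :=
          wnorm_fsupp_le p ω hp hω _ _
      _ = ∑ j ∈ Fu, ω (j - m) * ‖fsupp Fu (⇑u) (j - (m:ℤ) + m)‖ := Finset.sum_image hinj2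
      _ = ∑ j ∈ Fu, ω (j - m) * ‖u j‖ := by
          apply Finset.sum_congr rfl
          intro j hj
          rw [sub_add_cancel]
          simp [fsupp, hj]
      _ ≤ ∑ j ∈ Fu, (C ^ (2*q) * ω ((q:ℤ) - m)) * ‖u j‖ := by
          apply Finset.sum_le_sum
          intro j hj
          exact mul_le_mul_of_nonneg_right
            ((hwin j (hq j (Finset.mem_union_left _ hj))).2) (norm_nonneg _)
      _ = C ^ (2*q) * (ω ((q:ℤ) - m) * ∑ j ∈ Fu, ‖u j‖) := by
          rw [← Finset.mul_sum]; ring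
      _ < C ^ (2*q) * (ε' * S) := by
          apply mul_lt_mul_of_pos_left _ hC2q
          calc ω ((q:ℤ) - m) * ∑ j ∈ Fu, ‖u j‖ ≤ ε' * ∑ j ∈ Fu, ‖u j‖ :=
                mul_le_mul_of_nonneg_right hm3.le hSu
            _ < ε' * S := by
                apply mul_lt_mul_of_pos_left _ hε'pos
                rw [hSdef]; linarith
      _ = ε / 3 := by rw [hε'def]; field_simp
  refine ⟨m, w, ?_, ?_⟩
  · calc ‖w - u‖ = ‖(u' - u) + sh‖ := by rw [hw]; congr 1; abel
      _ ≤ ‖u' - u‖ + ‖sh‖ := norm_add_le _ _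
      _ < ε / 3 + ε / 3 := by
          apply add_lt_add _ hshnorm
          rw [norm_sub_rev]
          exact hFu
      _ < ε := by linarith
  · have : (B ^ m) w = (B ^ m) u' + v' := by
      rw [hw, map_add, hBsh]
    rw [this]
    calc ‖(B ^ m) u' + v' - v‖ = ‖(B ^ m) u' + (v' - v)‖ := by congr 1; abel
      _ ≤ ‖(B ^ m) u'‖ + ‖v' - v‖ := norm_add_le _ _
      _ < ε / 3 + ε / 3 := by
          apply add_lt_add hBu'norm
          rw [norm_sub_rev]
          exact hFv
      _ < ε := by linarith

end Trans


/-- if `Γ ⊂ ℂ` is bounded and bounded away from zero and for some `x` the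
orbit `{λ • B ^ n x : λ ∈ Γ, n ∈ ℕ}` has a non-zero norm limit point, then the bilateral
backward shift `B` is hypercyclic. -/
theorem stmt14 (p : ENNReal) [Fact (1 ≤ p)] (hp : p ≠ ∞) (ω : ℤ → ℝ) (hω : ∀ k, 0 < ω k)
    (hbdd : ∃ C : ℝ, ∀ k : ℤ, ω k / ω (k + 1) ≤ C)
    (B : Lp ℂ p (wMeasure p ω) →L[ℂ] Lp ℂ p (wMeasure p ω))
    (hB : ∀ (x : Lp ℂ p (wMeasure p ω)) (k : ℤ), B x k = x (k + 1))
    (Γ : Set ℂ) (hΓbd : ∃ M : ℝ, ∀ γ ∈ Γ, ‖γ‖ ≤ M)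
    (hΓaway : ∃ c : ℝ, 0 < c ∧ ∀ γ ∈ Γ, c ≤ ‖γ‖)
    (x : Lp ℂ p (wMeasure p ω))
    (lam : ℕ → ℂ) (hlam : ∀ k, lam k ∈ Γ)
    (n : ℕ → ℕ) (hn : StrictMono n)
    (y : Lp ℂ p (wMeasure p ω)) (hy : y ≠ 0)
    (hconv : Tendsto (fun k => lam k • (B ^ n k) x) atTop (nhds y)) :
    ∃ z : Lp ℂ p (wMeasure p ω), Dense (Set.range fun m : ℕ => (B ^ m) z) := by
  obtain ⟨C₀, hC₀⟩ := hbdd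
  set C : ℝ := max C₀ 1 with hCdef
  have hC1 : 1 ≤ C := le_max_right _ _
  have hC : ∀ k, ω k ≤ C * ω (k+1) := by
    intro k
    have h1 : ω k ≤ C₀ * ω (k+1) := (div_le_iff₀ (hω (k+1))).1 (hC₀ k)
    calc ω k ≤ C₀ * ω (k+1) := h1
      _ ≤ C * ω (k+1) := mul_le_mul_of_nonneg_right (le_max_left _ _) (hω _).le
  obtain ⟨M, hM⟩ := hΓbd
  obtain ⟨c, hc, hcl⟩ := hΓaway
  have hkey := wkeyL p ω hp hω hC hC1 B hB hc x lam
    (fun k => hM _ (hlam k)) (fun k => hcl _ (hlam k)) n hn y hy hconv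
  have htrans := fun (u v : Lp ℂ p (wMeasure p ω)) {ε : ℝ} (hε : 0 < ε) =>
    wtrans p ω hp hω hC hC1 B hB hkey u v hε
  -- countable dense set
  have hDne : (wD p ω hp).Nonempty :=
    ⟨_, ⟨⟨(∅ : Finset ℤ), fun _ => (0, 0)⟩, rfl⟩⟩
  obtain ⟨d, hd⟩ := Set.Countable.exists_eq_range (wD_countable p ω hp) hDne
  -- open dense sets
  set G : ℕ × ℕ → Set (Lp ℂ p (wMeasure p ω)) := fun im =>
    ⋃ j : ℕ, (⇑(B ^ j)) ⁻¹' Metric.ball (d im.1) (1/(im.2+1)) with hG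
  have hGopen : ∀ im, IsOpen (G im) := fun im =>
    isOpen_iUnion fun j => ((B ^ j).continuous).isOpen_preimage _ Metric.isOpen_ball
  have hGdense : ∀ im, Dense (G im) := by
    intro im
    rw [Metric.dense_iff]
    intro z r hr
    have hmin : 0 < min r (1/(im.2+1)) := lt_min hr (by positivity)
    obtain ⟨m, w, hw1, hw2⟩ := htrans z (d im.1) hmin
    refine ⟨w, ?_, ?_⟩
    · rw [Metric.mem_ball, dist_eq_norm]
      exact lt_of_lt_of_le hw1 (min_le_left _ _)
    · refine Set.mem_iUnion.2 ⟨m, ?_⟩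
      rw [Set.mem_preimage, Metric.mem_ball, dist_eq_norm]
      exact lt_of_lt_of_le hw2 (min_le_right _ _)
  have hdense : Dense (⋂ im, G im) := dense_iInter_of_isOpen hGopen hGdense
  obtain ⟨z, hz⟩ := hdense.nonempty
  refine ⟨z, ?_⟩
  rw [Metric.dense_iff]
  intro g r hr
  have hr2 : 0 < r / 2 := by linarith
  obtain ⟨g', hg'D, hg'⟩ := wD_dense p ω hp hω g hr2
  obtain ⟨i, hi⟩ : ∃ i, d i = g' := by
    have : g' ∈ Set.range d := by rw [← hd]; exact hg'D
    obtain ⟨i, hi⟩ := this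
    exact ⟨i, hi⟩
  obtain ⟨m2, hm2⟩ := exists_nat_one_div_lt hr2
  have hzG : z ∈ G (i, m2) := Set.mem_iInter.1 hz (i, m2)
  obtain ⟨j, hj⟩ := Set.mem_iUnion.1 hzG
  rw [Set.mem_preimage, Metric.mem_ball] at hj
  refine ⟨(B ^ j) z, ?_, ⟨j, rfl⟩⟩
  rw [Metric.mem_ball]
  calc dist ((B ^ j) z) g ≤ dist ((B ^ j) z) (d i) + dist (d i) g := dist_triangle _ _ _
    _ < 1/(m2+1) + r/2 := by
        apply add_lt_add hj
        rw [hi, dist_comm, dist_eq_norm]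
        exact hg'
    _ < r/2 + r/2 := by
        apply add_lt_add_of_lt_of_le _ le_rfl
        exact_mod_cast hm2
    _ = r := by ring
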